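/- The symmetric matrix with 1's on the diagonal and all off-diagonal entries equal to −0.4 in dimension 3 is positive semidefinite, yet there is no distribution on {0,1}³ with Bernoulli(1/2) marginals whose pairwise correlations all equal −0.4 (equivalently, whose concurrence probabilities all equal 0.3). -/

import Mathlib

theorem stmt7 :
    Matrix.PosSemidef
      (!![1, -0.4, -0.4; -0.4, 1, -0.4; -0.4, -0.4, 1] : Matrix (Fin 3) (Fin 3) ℝ) ∧
    ¬ (∃ p : Bool × Bool × Bool → ℝ,
      (∀ x, 0 ≤ p x) ∧ (∑ x, p x) = 1 ∧
      (∑ x ∈ Finset.univ.filter (fun x : Bool × Bool × Bool => x.1 = true), p x) = 1/2 ∧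
      (∑ x ∈ Finset.univ.filter (fun x : Bool × Bool × Bool => x.2.1 = true), p x) = 1/2 ∧
      (∑ x ∈ Finset.univ.filter (fun x : Bool × Bool × Bool => x.2.2 = true), p x) = 1/2 ∧
      (∑ x ∈ Finset.univ.filter (fun x : Bool × Bool × Bool => x.1 = x.2.1), p x) = 0.3 ∧
      (∑ x ∈ Finset.univ.filter (fun x : Bool × Bool × Bool => x.1 = x.2.2), p x) = 0.3 ∧
      (∑ x ∈ Finset.univ.filter (fun x : Bool × Bool × Bool => x.2.1 = x.2.2), p x) = 0.3) := by
  constructor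
  · constructor
    · ext i j
      fin_cases i <;> fin_cases j <;>
        simp [Matrix.conjTranspose_apply, Matrix.vecHead, Matrix.vecTail]
    · intro x
      simp [Finsupp.sum_fintype, Matrix.mulVec, Fin.sum_univ_three, Matrix.vecHead,
        Matrix.vecTail]
      nlinarith [sq_nonneg (x 0 - x 1), sq_nonneg (x 1 - x 2), sq_nonneg (x 0 - x 2),
        sq_nonneg (x 0), sq_nonneg (x 1), sq_nonneg (x 2)]
  · rintro ⟨p, hpos, hsum, _, _, _, h12, h13, h23⟩
    rw [show (Finset.univ : Finset (Bool × Bool × Bool)) =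
      {(false,false,false),(false,false,true),(false,true,false),(false,true,true),
       (true,false,false),(true,false,true),(true,true,false),(true,true,true)} from by decide]
      at hsum h12 h13 h23
    simp [Finset.filter_insert, Finset.sum_insert, Finset.filter_singleton]
      at hsum h12 h13 h23
    have := hpos (false,false,false)
    have := hpos (true,true,true)
    norm_num at hsum h12 h13 h23
    linarith
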